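/- For every t ∈ ℂ with t(2t+1) ≠ 0, the only point (Z₀,Z₁,Z₂) ∈ ℂ³ at which g_t and all three partial derivatives ∂g_t/∂Z₀, ∂g_t/∂Z₁, ∂g_t/∂Z₂ vanish simultaneously is (0,0,0). (Thus the plane quartic curve C_t defined by g_t = 0 in ℙ² is smooth.) -/

import Mathlib

/-- The quartic form `g_t(Z₀,Z₁,Z₂) = Z₂⁴ − Z₀(2Z₁+tZ₀)(2Z₁²−2Z₁Z₀−tZ₀²)`. -/
noncomputable def gForm (t Z₀ Z₁ Z₂ : ℂ) : ℂ :=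
  Z₂ ^ 4 - Z₀ * (2 * Z₁ + t * Z₀) * (2 * Z₁ ^ 2 - 2 * Z₁ * Z₀ - t * Z₀ ^ 2)

lemma hasDerivAt_quartic (a b c d e x : ℂ) :
    HasDerivAt (fun z : ℂ => a * z ^ 4 + b * z ^ 3 + c * z ^ 2 + d * z + e)
      (4 * a * x ^ 3 + 3 * b * x ^ 2 + 2 * c * x + d) x := by
  have h4 := (hasDerivAt_pow 4 x).const_mul a
  have h3 := (hasDerivAt_pow 3 x).const_mul b
  have h2 := (hasDerivAt_pow 2 x).const_mul c
  have h1 := (hasDerivAt_id x).const_mul d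
  have := (((h4.add h3).add h2).add h1).add_const e
  refine this.congr_deriv ?_
  push_cast
  ring

/-- For `t(2t+1) ≠ 0`, if `g_t` and all its partial derivatives vanish at
`(Z₀,Z₁,Z₂) ∈ ℂ³`, then `(Z₀,Z₁,Z₂) = (0,0,0)`; i.e. the plane quartic `C_t` is smooth. -/
theorem stmt2 (t : ℂ) (ht : t * (2 * t + 1) ≠ 0) (Z₀ Z₁ Z₂ : ℂ)
    (h : gForm t Z₀ Z₁ Z₂ = 0)
    (h0 : deriv (fun z => gForm t z Z₁ Z₂) Z₀ = 0)
    (h1 : deriv (fun z => gForm t Z₀ z Z₂) Z₁ = 0)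
    (h2 : deriv (fun z => gForm t Z₀ Z₁ z) Z₂ = 0) :
    Z₀ = 0 ∧ Z₁ = 0 ∧ Z₂ = 0 := by
  have ht0 : t ≠ 0 := fun h' => ht (by rw [h']; ring)
  have ht1 : (2 * t + 1) ≠ 0 := fun h' => ht (by rw [h']; ring)
  -- compute the three partial derivatives
  have e0 : deriv (fun z => gForm t z Z₁ Z₂) Z₀
      = 4 * t ^ 2 * Z₀ ^ 3 + 12 * t * Z₁ * Z₀ ^ 2 + (8 - 4 * t) * Z₁ ^ 2 * Z₀ - 4 * Z₁ ^ 3 := by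
    have hf : (fun z => gForm t z Z₁ Z₂)
        = fun z : ℂ => t ^ 2 * z ^ 4 + (4 * t * Z₁) * z ^ 3 + ((4 - 2 * t) * Z₁ ^ 2) * z ^ 2
          + (-4 * Z₁ ^ 3) * z + Z₂ ^ 4 := by
      funext z; simp only [gForm]; ring
    rw [hf, (hasDerivAt_quartic _ _ _ _ _ Z₀).deriv]; ring
  have e1 : deriv (fun z => gForm t Z₀ z Z₂) Z₁
      = -12 * Z₀ * Z₁ ^ 2 + (8 - 4 * t) * Z₀ ^ 2 * Z₁ + 4 * t * Z₀ ^ 3 := by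
    have hf : (fun z => gForm t Z₀ z Z₂)
        = fun z : ℂ => 0 * z ^ 4 + (-4 * Z₀) * z ^ 3 + ((4 - 2 * t) * Z₀ ^ 2) * z ^ 2
          + (4 * t * Z₀ ^ 3) * z + (Z₂ ^ 4 + t ^ 2 * Z₀ ^ 4) := by
      funext z; simp only [gForm]; ring
    rw [hf, (hasDerivAt_quartic _ _ _ _ _ Z₁).deriv]; ring
  have e2 : deriv (fun z => gForm t Z₀ Z₁ z) Z₂ = 4 * Z₂ ^ 3 := by
    have hf : (fun z => gForm t Z₀ Z₁ z)
        = fun z : ℂ => 1 * z ^ 4 + 0 * z ^ 3 + 0 * z ^ 2 + 0 * z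
          + (-(Z₀ * (2 * Z₁ + t * Z₀) * (2 * Z₁ ^ 2 - 2 * Z₁ * Z₀ - t * Z₀ ^ 2))) := by
      funext z; simp only [gForm]; ring
    rw [hf, (hasDerivAt_quartic _ _ _ _ _ Z₂).deriv]; ring
  rw [e0] at h0
  rw [e1] at h1
  rw [e2] at h2
  -- Z₂ = 0
  have hZ2 : Z₂ = 0 := by
    have : Z₂ ^ 3 = 0 := by linear_combination h2 / 4
    exact pow_eq_zero_iff (by norm_num) |>.mp this
  subst hZ2
  by_cases hZ0 : Z₀ = 0
  · subst hZ0
    have hZ1 : Z₁ = 0 := by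
      have : Z₁ ^ 3 = 0 := by linear_combination -h0 / 4
      exact pow_eq_zero_iff (by norm_num) |>.mp this
    exact ⟨rfl, hZ1, rfl⟩
  · exfalso
    -- from g = 0 : Z₀ * A * B = 0 with A = 2Z₁ + tZ₀, B = 2Z₁² - 2Z₁Z₀ - tZ₀²
    have hAB : (2 * Z₁ + t * Z₀) * (2 * Z₁ ^ 2 - 2 * Z₁ * Z₀ - t * Z₀ ^ 2) = 0 := by
      have hg : Z₀ * ((2 * Z₁ + t * Z₀) * (2 * Z₁ ^ 2 - 2 * Z₁ * Z₀ - t * Z₀ ^ 2)) = 0 := by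
        simp only [gForm] at h
        linear_combination -h
      rcases mul_eq_zero.mp hg with h' | h'
      · exact absurd h' hZ0
      · exact h'
    have key : ∀ _ : (2 * Z₁ + t * Z₀) = 0, False := by
      intro hA
      -- then h1 gives B = 0, and A = B = 0 gives t² Z₀² = 0
      have hB : 2 * Z₁ ^ 2 - 2 * Z₁ * Z₀ - t * Z₀ ^ 2 = 0 := by
        have h1' : Z₀ * (2 * (2 * Z₁ ^ 2 - 2 * Z₁ * Z₀ - t * Z₀ ^ 2)) = 0 := by
          linear_combination -h1 - Z₀ * (4 * Z₁ - 2 * Z₀) * hA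
        rcases mul_eq_zero.mp h1' with h' | h'
        · exact absurd h' hZ0
        · linear_combination h' / 2
      have ht2 : t ^ 2 * Z₀ ^ 2 = 0 := by
        linear_combination 2 * hB + (t * Z₀ - 2 * Z₁ + 2 * Z₀) * hA
      rcases mul_eq_zero.mp ht2 with h' | h'
      · exact ht0 (pow_eq_zero_iff (by norm_num) |>.mp h')
      · exact hZ0 (pow_eq_zero_iff (by norm_num) |>.mp h')
    rcases mul_eq_zero.mp hAB with hA | hB
    · exact key hA
    · -- B = 0 case: h1 gives A * (4Z₁ - 2Z₀) = 0
      have h1' : Z₀ * ((2 * Z₁ + t * Z₀) * (4 * Z₁ - 2 * Z₀)) = 0 := by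
        linear_combination -h1 - 2 * Z₀ * hB
      rcases mul_eq_zero.mp h1' with h' | h'
      · exact hZ0 h'
      rcases mul_eq_zero.mp h' with hA | hC
      · exact key hA
      · -- Z₁ = Z₀/2 and B = 0 force (2t+1)Z₀² = 0
        have : (2 * t + 1) * Z₀ ^ 2 = 0 := by
          linear_combination -2 * hB + ((2 * Z₁ - Z₀) / 2) * hC
        rcases mul_eq_zero.mp this with h'' | h''
        · exact ht1 h''
        · exact hZ0 (pow_eq_zero_iff (by norm_num) |>.mp h'')
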